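/- With K as above, there exist positive constants d₂, d₃ (depending on g) such that d₃ (ξ^{2-a} − 1) ≤ K(ξ) ξ² ≤ d₂ ξ^{2-a} for all ξ ≥ 0, where a = α_N/(α_N+1). -/

import Mathlib

/-- With `K(ξ) = 1/g(s(ξ))` as before and `a = α_N/(α_N+1)`, there are `d₂, d₃ > 0` with
`d₃ (ξ^{2-a} − 1) ≤ K(ξ) ξ² ≤ d₂ ξ^{2-a}` for all `ξ ≥ 0`. -/
theorem stmt_7 (N : ℕ) (hN : 1 ≤ N) (a α : ℕ → ℝ)
    (ha : ∀ i ≤ N, 0 < a i) (hα1 : 0 < α 1)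
    (hαmono : ∀ i, 1 ≤ i → i < N → α i < α (i + 1))
    (g : ℝ → ℝ) (hg : ∀ x : ℝ, g x = a 0 + ∑ i ∈ Finset.Icc 1 N, a i * x ^ (α i))
    (s : ℝ → ℝ) (hs : ∀ ξ : ℝ, 0 ≤ ξ → 0 ≤ s ξ ∧ s ξ * g (s ξ) = ξ) :
    ∃ d₂ > (0 : ℝ), ∃ d₃ > (0 : ℝ), ∀ ξ : ℝ, 0 ≤ ξ →
      d₃ * (ξ ^ (2 - α N / (α N + 1)) - 1) ≤ (1 / g (s ξ)) * ξ ^ 2 ∧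
      (1 / g (s ξ)) * ξ ^ 2 ≤ d₂ * ξ ^ (2 - α N / (α N + 1)) := by
  -- monotonicity of α on [1, N]
  have hmono : ∀ i j, 1 ≤ i → i ≤ j → j ≤ N → α i ≤ α j := by
    intro i j h1 hij
    induction j, hij using Nat.le_induction with
    | base => intro _; exact le_rfl
    | succ j hij ih =>
      intro hjN
      have hjN' : j ≤ N := Nat.le_of_succ_le hjN
      have h1j : 1 ≤ j := le_trans h1 hij
      exact le_trans (ih hjN') (le_of_lt (hαmono j h1j (Nat.lt_of_succ_le hjN)))
  have hαpos : ∀ i, 1 ≤ i → i ≤ N → 0 < α i := fun i h1 hiN =>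
    lt_of_lt_of_le hα1 (hmono 1 i le_rfl h1 hiN)
  have hn : 0 < α N := hαpos N hN le_rfl
  have hn1 : (0:ℝ) < α N + 1 := by linarith
  set n := α N with hn_def
  have h2a : 2 - α N / (α N + 1) = 1 + 1/(α N + 1) := by
    have hne : α N + 1 ≠ 0 := ne_of_gt hn1
    have h1 : (α N + 1) / (α N + 1) = 1 := div_self hne
    have h2 : (α N + 1) / (α N + 1) = α N / (α N + 1) + 1 / (α N + 1) := by ring
    linarith
  have ha1 : α N / (α N + 1) < 1 := by
    rw [div_lt_one hn1]; linarith
  set q : ℝ := 1/(α N + 1) with hq_def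
  have hq0 : 0 < q := by positivity
  have hq1 : q ≤ 1 := by rw [hq_def, div_le_one hn1]; linarith
  -- positivity of g on [0,∞)
  have hgpos : ∀ x : ℝ, 0 ≤ x → 0 < g x := by
    intro x hx
    rw [hg x]
    have : (0:ℝ) ≤ ∑ i ∈ Finset.Icc 1 N, a i * x ^ (α i) := by
      apply Finset.sum_nonneg
      intro i hi
      simp only [Finset.mem_Icc] at hi
      exact mul_nonneg (le_of_lt (ha i hi.2)) (Real.rpow_nonneg hx _)
    have h0 := ha 0 (Nat.zero_le N)
    linarith
  -- lower bound for g
  have hglb : ∀ x : ℝ, 0 ≤ x → a N * x ^ n ≤ g x := by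
    intro x hx
    rw [hg x]
    have hNmem : N ∈ Finset.Icc 1 N := by simp [hN]
    have := Finset.single_le_sum (f := fun i => a i * x ^ (α i))
      (fun i hi => by
        simp only [Finset.mem_Icc] at hi
        exact mul_nonneg (le_of_lt (ha i hi.2)) (Real.rpow_nonneg hx _)) hNmem
    have h0 := ha 0 (Nat.zero_le N)
    linarith
  -- upper bound for g
  set A : ℝ := a 0 + ∑ i ∈ Finset.Icc 1 N, a i with hA_def
  set A' : ℝ := max 1 A with hA'_def
  have hA'1 : (1:ℝ) ≤ A' := le_max_left _ _
  have hA'0 : (0:ℝ) < A' := lt_of_lt_of_le one_pos hA'1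
  have hgub : ∀ x : ℝ, 0 ≤ x → g x ≤ A' * (1 + x ^ n) := by
    intro x hx
    have hxn : (0:ℝ) ≤ x ^ n := Real.rpow_nonneg hx _
    have h1 : g x ≤ A * (1 + x ^ n) := by
      have hsum : ∑ i ∈ Finset.Icc 1 N, a i * x ^ (α i)
          ≤ ∑ i ∈ Finset.Icc 1 N, a i * (1 + x ^ n) := by
        apply Finset.sum_le_sum
        intro i hi
        simp only [Finset.mem_Icc] at hi
        have hai := ha i hi.2
        have hb : x ^ (α i) ≤ 1 + x ^ n := by
          rcases le_or_gt x 1 with hx1 | hx1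
          · have h2 : x ^ (α i) ≤ 1 :=
              Real.rpow_le_one hx hx1 (le_of_lt (hαpos i hi.1 hi.2))
            linarith
          · have h2 : x ^ (α i) ≤ x ^ n :=
              Real.rpow_le_rpow_of_exponent_le (le_of_lt hx1) (hmono i N hi.1 hi.2 le_rfl)
            linarith
        exact mul_le_mul_of_nonneg_left hb (le_of_lt hai)
      have h0 := ha 0 (Nat.zero_le N)
      calc g x = a 0 + ∑ i ∈ Finset.Icc 1 N, a i * x ^ (α i) := hg x
      _ ≤ a 0 * (1 + x ^ n) + ∑ i ∈ Finset.Icc 1 N, a i * (1 + x ^ n) :=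
          add_le_add (by nlinarith) hsum
      _ = A * (1 + x ^ n) := by rw [hA_def, add_mul, Finset.sum_mul]
    have h2 : A * (1 + x ^ n) ≤ A' * (1 + x ^ n) := by
      apply mul_le_mul_of_nonneg_right (le_max_right _ _)
      linarith
    linarith
  have haN0 := ha N le_rfl
  refine ⟨1 / (a N ^ q), by positivity, 1 / (2 * A'), by positivity, ?_⟩
  intro ξ hξ
  obtain ⟨ht0, htg⟩ := hs ξ hξ
  set t := s ξ with ht_def
  have hgt : 0 < g t := hgpos t ht0
  have hkey : (1 / g t) * ξ ^ 2 = t * ξ := by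
    rw [← htg]; field_simp
  rcases eq_or_lt_of_le hξ with hξ0 | hξpos
  · -- ξ = 0
    rw [hkey, ← hξ0]
    constructor
    · have : (0:ℝ) ^ (2 - α N / (α N + 1)) = 0 := by
        rw [Real.zero_rpow]; linarith
      rw [this]
      have hpos : (0:ℝ) < 1 / (2 * A') := by positivity
      simp only [mul_zero, zero_sub]
      linarith
    · have : (0:ℝ) ^ (2 - α N / (α N + 1)) = 0 := by
        rw [Real.zero_rpow]; linarith
      rw [this]; simp
  · -- ξ > 0
    have htpos : 0 < t := by
      rcases eq_or_lt_of_le ht0 with h | h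
      · exfalso; rw [← htg, ← h] at hξpos; simp at hξpos
      · exact h
    have hrpow_split : ξ ^ (2 - α N / (α N + 1)) = ξ * ξ ^ q := by
      rw [h2a, Real.rpow_add hξpos, Real.rpow_one]
    rw [hkey, hrpow_split]
    have hpow_inv : ∀ u : ℝ, 0 < u → (u ^ (n + 1)) ^ q = u := by
      intro u hu
      have hmul : (n + 1) * q = 1 := by rw [hq_def]; field_simp; exact div_self (ne_of_gt hn1)
      rw [← Real.rpow_mul (le_of_lt hu), hmul, Real.rpow_one]
    have haN := ha N le_rfl
    constructor
    · -- lower bound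
      rcases le_or_gt ξ 1 with hξ1 | hξ1
      · have hle1 : ξ * ξ ^ q ≤ 1 := by
          have h1 : ξ ^ q ≤ 1 := Real.rpow_le_one hξ hξ1 (le_of_lt hq0)
          nlinarith [Real.rpow_nonneg hξ q]
        have : ξ * ξ ^ q - 1 ≤ 0 := by linarith
        have hd3 : (0:ℝ) < 1 / (2 * A') := by positivity
        nlinarith [mul_nonneg ht0 hξ]
      · -- ξ > 1
        have hgtub : g t ≤ A' * (1 + t ^ n) := hgub t ht0
        have hstep : 1 / (2 * A') * ξ ^ q ≤ t := by
          rcases le_or_gt t 1 with ht1 | ht1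
          · -- t ≤ 1 : ξ ≤ 2 A' t
            have htn1 : t ^ n ≤ 1 := Real.rpow_le_one ht0 ht1 (le_of_lt hn)
            have : ξ ≤ t * (A' * 2) := by
              calc ξ = t * g t := htg.symm
              _ ≤ t * (A' * (1 + t ^ n)) := by
                  exact mul_le_mul_of_nonneg_left hgtub ht0
              _ ≤ t * (A' * 2) := by
                  apply mul_le_mul_of_nonneg_left _ ht0
                  apply mul_le_mul_of_nonneg_left _ (le_of_lt hA'0)
                  linarith
            have hξq : ξ ^ q ≤ ξ := by
              calc ξ ^ q ≤ ξ ^ (1:ℝ) :=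
                    Real.rpow_le_rpow_of_exponent_le (le_of_lt hξ1) hq1
              _ = ξ := Real.rpow_one ξ
            calc 1 / (2 * A') * ξ ^ q ≤ 1 / (2 * A') * ξ := by
                  apply mul_le_mul_of_nonneg_left hξq (by positivity)
            _ ≤ t := by
                  rw [div_mul_eq_mul_div, one_mul, div_le_iff₀ (by positivity)]
                  linarith
          · -- t > 1
            have htn1 : (1:ℝ) ≤ t ^ n := Real.one_le_rpow (le_of_lt ht1) (le_of_lt hn)
            have hξle : ξ ≤ 2 * A' * t ^ (n + 1) := by
              have htn : t ^ (n + 1) = t ^ n * t := by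
                rw [Real.rpow_add htpos, Real.rpow_one]
              calc ξ = t * g t := htg.symm
              _ ≤ t * (A' * (1 + t ^ n)) := mul_le_mul_of_nonneg_left hgtub ht0
              _ ≤ t * (A' * (2 * t ^ n)) := by
                  apply mul_le_mul_of_nonneg_left _ ht0
                  apply mul_le_mul_of_nonneg_left _ (le_of_lt hA'0)
                  linarith
              _ = 2 * A' * t ^ (n + 1) := by rw [htn]; ring
            have ht_lb : (ξ / (2 * A')) ^ q ≤ t := by
              have h1 : ξ / (2 * A') ≤ t ^ (n + 1) := by
                rw [div_le_iff₀ (by positivity)]; linarith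
              have h2 : (ξ / (2 * A')) ^ q ≤ (t ^ (n + 1)) ^ q :=
                Real.rpow_le_rpow (by positivity) h1 (le_of_lt hq0)
              have h3 : (t ^ (n + 1)) ^ q = t := hpow_inv t htpos
              rw [h3] at h2; exact h2
            have hsplit : (ξ / (2 * A')) ^ q = ξ ^ q / (2 * A') ^ q :=
              Real.div_rpow hξ (by positivity) q
            have h2A'q : (2 * A') ^ q ≤ 2 * A' := by
              calc (2 * A') ^ q ≤ (2 * A') ^ (1:ℝ) :=
                    Real.rpow_le_rpow_of_exponent_le (by linarith) hq1
              _ = 2 * A' := Real.rpow_one _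
            calc 1 / (2 * A') * ξ ^ q = ξ ^ q / (2 * A') := by ring
            _ ≤ ξ ^ q / (2 * A') ^ q := by
                apply div_le_div_of_nonneg_left (Real.rpow_nonneg hξ q) _ h2A'q
                positivity
            _ = (ξ / (2 * A')) ^ q := hsplit.symm
            _ ≤ t := ht_lb
        have hξqpos : 0 < ξ ^ q := Real.rpow_pos_of_pos hξpos q
        calc 1 / (2 * A') * (ξ * ξ ^ q - 1) ≤ 1 / (2 * A') * (ξ * ξ ^ q) := by
              apply mul_le_mul_of_nonneg_left _ (by positivity)
              linarith
        _ = (1 / (2 * A') * ξ ^ q) * ξ := by ring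
        _ ≤ t * ξ := mul_le_mul_of_nonneg_right hstep hξ
    · -- upper bound
      have hξ_lb : a N * t ^ (n + 1) ≤ ξ := by
        have htn : t ^ (n + 1) = t ^ n * t := by
          rw [Real.rpow_add htpos, Real.rpow_one]
        calc a N * t ^ (n + 1) = (a N * t ^ n) * t := by rw [htn]; ring
        _ ≤ g t * t := mul_le_mul_of_nonneg_right (hglb t ht0) ht0
        _ = ξ := by rw [mul_comm]; exact htg
      have ht_ub : t ≤ (ξ / a N) ^ q := by
        have h1 : t ^ (n + 1) ≤ ξ / a N := by
          rw [le_div_iff₀ haN]; linarith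
        have h2 : (t ^ (n + 1)) ^ q ≤ (ξ / a N) ^ q :=
          Real.rpow_le_rpow (Real.rpow_nonneg ht0 _) h1 (le_of_lt hq0)
        have h3 : (t ^ (n + 1)) ^ q = t := hpow_inv t htpos
        rw [h3] at h2; exact h2
      have hsplit : (ξ / a N) ^ q = ξ ^ q / a N ^ q :=
        Real.div_rpow hξ (le_of_lt haN) q
      calc t * ξ ≤ (ξ / a N) ^ q * ξ := mul_le_mul_of_nonneg_right ht_ub hξ
      _ = 1 / a N ^ q * (ξ * ξ ^ q) := by rw [hsplit]; ring
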